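/- Let φ : ℝ₊ → ℝ₊ be a bounded function and A a positive random variable such that for some p ∈ (0,1), t₀ ≥ 0, and all t > t₀, φ(t) ≤ p·E[φ(A t)]. If p·E[A^{-a}] < 1 for some a ∈ (0,∞), then φ(t) = O(t^{-a}) as t → ∞. -/

import Mathlib

open MeasureTheory Filter

/-- Liu's lemma: if `φ : ℝ₊ → ℝ₊` is bounded, `A > 0` is a random variable, and for
some `p ∈ (0,1)`, `t₀ ≥ 0` and all `t > t₀` we have `φ(t) ≤ p E[φ(A t)]`, then
`p E[A^{-a}] < 1` for some `a > 0` implies `φ(t) = O(t^{-a})` as `t → ∞`. -/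
theorem stmt_5 {Ω : Type*} [MeasurableSpace Ω] (μ : Measure Ω) [IsProbabilityMeasure μ]
    (A : Ω → ℝ) (hAmeas : Measurable A) (hApos : ∀ ω, 0 < A ω)
    (φ : ℝ → ℝ) (hφmeas : Measurable φ)
    (hφnonneg : ∀ t : ℝ, 0 ≤ t → 0 ≤ φ t)
    (hφbdd : ∃ M : ℝ, ∀ t : ℝ, 0 ≤ t → φ t ≤ M)
    (p t₀ : ℝ) (hp0 : 0 < p) (hp1 : p < 1) (ht₀ : 0 ≤ t₀)
    (hrec : ∀ t : ℝ, t₀ < t → φ t ≤ p * ∫ ω, φ (A ω * t) ∂μ)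
    (a : ℝ) (ha : 0 < a)
    (hint : Integrable (fun ω => (A ω) ^ (-a)) μ)
    (hcontract : p * ∫ ω, (A ω) ^ (-a) ∂μ < 1) :
    (fun t : ℝ => φ t) =O[atTop] fun t : ℝ => t ^ (-a) := by
  obtain ⟨M, hM⟩ := hφbdd
  set I : ℝ := ∫ ω, (A ω) ^ (-a) ∂μ with hI
  have hI0 : 0 ≤ I := integral_nonneg fun ω => Real.rpow_nonneg (hApos ω).le _
  have hM0 : 0 ≤ M := (hφnonneg 0 le_rfl).trans (hM 0 le_rfl)
  have hr0 : 0 ≤ p * I := mul_nonneg hp0.le hI0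
  set K : ℝ := p * M * t₀ ^ a * I with hK
  have hK0 : 0 ≤ K := by positivity
  -- key induction
  have key : ∀ n : ℕ, ∀ t : ℝ, t₀ < t →
      φ t ≤ K * (∑ k ∈ Finset.range n, (p * I) ^ k) * t ^ (-a) + p ^ n * M := by
    intro n
    induction n with
    | zero => intro t ht; simpa using hM t (ht₀.trans ht.le)
    | succ n ih =>
      intro t ht
      have ht0 : 0 < t := lt_of_le_of_lt ht₀ ht
      set S : ℝ := ∑ k ∈ Finset.range n, (p * I) ^ k with hS
      have hS0 : 0 ≤ S := Finset.sum_nonneg fun k _ => pow_nonneg hr0 k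
      have hta : 0 ≤ t ^ (-a) := Real.rpow_nonneg ht0.le _
      -- pointwise bound
      have hpt : ∀ ω, φ (A ω * t) ≤
          (M * t₀ ^ a + K * S) * t ^ (-a) * (A ω) ^ (-a) + p ^ n * M := by
        intro ω
        have hb : 0 < A ω := hApos ω
        have hba : 0 ≤ (A ω) ^ (-a) := Real.rpow_nonneg hb.le _
        rcases le_or_gt (A ω * t) t₀ with hc | hc
        · -- small case: A ω * t ≤ t₀
          have hbt : 0 < A ω * t := mul_pos hb ht0
          have h1 : (1:ℝ) ≤ (t₀ / (A ω * t)) ^ a :=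
            Real.one_le_rpow ((one_le_div hbt).2 hc) ha.le
          have heq : (t₀ / (A ω * t)) ^ a = t₀ ^ a * t ^ (-a) * (A ω) ^ (-a) := by
            rw [Real.div_rpow ht₀ hbt.le, Real.mul_rpow hb.le ht0.le,
              Real.rpow_neg ht0.le, Real.rpow_neg hb.le, div_eq_mul_inv, mul_inv]
            ring
          have hφM : φ (A ω * t) ≤ M := hM _ hbt.le
          have hMle : M ≤ M * (t₀ ^ a * t ^ (-a) * (A ω) ^ (-a)) :=
            le_mul_of_one_le_right hM0 (heq ▸ h1)
          nlinarith [mul_nonneg (mul_nonneg (mul_nonneg hK0 hS0) hta) hba,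
            mul_nonneg (pow_nonneg hp0.le n) hM0]
        · -- large case: use induction hypothesis
          have := ih (A ω * t) hc
          have hsplit : (A ω * t) ^ (-a) = (A ω) ^ (-a) * t ^ (-a) :=
            Real.mul_rpow hb.le ht0.le
          rw [hsplit] at this
          have ht₀a : 0 ≤ t₀ ^ a := Real.rpow_nonneg ht₀ _
          nlinarith [mul_nonneg (mul_nonneg hM0 ht₀a) (mul_nonneg hta hba)]
      -- integrate the pointwise bound
      have hgint : Integrable
          (fun ω => (M * t₀ ^ a + K * S) * t ^ (-a) * (A ω) ^ (-a) + p ^ n * M) μ :=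
        (hint.const_mul _).add (integrable_const _)
      have hφnn : 0 ≤ᵐ[μ] fun ω => φ (A ω * t) :=
        Filter.Eventually.of_forall fun ω =>
          hφnonneg _ (mul_nonneg (hApos ω).le ht0.le)
      have hle : (∫ ω, φ (A ω * t) ∂μ) ≤
          (M * t₀ ^ a + K * S) * t ^ (-a) * I + p ^ n * M := by
        calc (∫ ω, φ (A ω * t) ∂μ)
            ≤ ∫ ω, ((M * t₀ ^ a + K * S) * t ^ (-a) * (A ω) ^ (-a) + p ^ n * M) ∂μ :=
              integral_mono_of_nonneg hφnn hgint (Filter.Eventually.of_forall hpt)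
          _ = (M * t₀ ^ a + K * S) * t ^ (-a) * I + p ^ n * M := by
              rw [integral_add (hint.const_mul _) (integrable_const _),
                integral_const_mul, integral_const]
              simp [hI]
      calc φ t ≤ p * ∫ ω, φ (A ω * t) ∂μ := hrec t ht
        _ ≤ p * ((M * t₀ ^ a + K * S) * t ^ (-a) * I + p ^ n * M) := by
            exact mul_le_mul_of_nonneg_left hle hp0.le
        _ = K * (∑ k ∈ Finset.range (n+1), (p * I) ^ k) * t ^ (-a) + p ^ (n+1) * M := by
            rw [geom_sum_succ]
            ring
  -- pass to the limit n → ∞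
  have hfinal : ∀ t : ℝ, t₀ < t → φ t ≤ (K / (1 - p * I)) * t ^ (-a) := by
    intro t ht
    have ht0 : 0 < t := lt_of_le_of_lt ht₀ ht
    have hta : 0 ≤ t ^ (-a) := Real.rpow_nonneg ht0.le _
    have h1r : 0 < 1 - p * I := by linarith
    have hgeom : ∀ n : ℕ, (∑ k ∈ Finset.range n, (p * I) ^ k) * (1 - p * I) ≤ 1 := by
      intro n
      have h2 : (∑ k ∈ Finset.range n, (p * I) ^ k) * (1 - p * I) = 1 - (p * I) ^ n := by
        linear_combination -geom_sum_mul (p * I) n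
      rw [h2]
      nlinarith [pow_nonneg hr0 n]
    have hbound : ∀ n : ℕ, φ t ≤ (K / (1 - p * I)) * t ^ (-a) + p ^ n * M := by
      intro n
      refine (key n t ht).trans ?_
      have : K * (∑ k ∈ Finset.range n, (p * I) ^ k) * t ^ (-a) ≤
          (K / (1 - p * I)) * t ^ (-a) := by
        rw [div_mul_eq_mul_div, le_div_iff₀ h1r]
        nlinarith [mul_le_mul_of_nonneg_left (hgeom n) (mul_nonneg hK0 hta)]
      linarith
    have hlim : Tendsto (fun n : ℕ => (K / (1 - p * I)) * t ^ (-a) + p ^ n * M)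
        atTop (nhds ((K / (1 - p * I)) * t ^ (-a))) := by
      have := (tendsto_pow_atTop_nhds_zero_of_lt_one hp0.le hp1).mul_const M
      simpa using tendsto_const_nhds.add this
    exact ge_of_tendsto' hlim hbound
  -- conclude Big O
  rw [Asymptotics.isBigO_iff]
  refine ⟨K / (1 - p * I), ?_⟩
  filter_upwards [eventually_gt_atTop t₀, eventually_gt_atTop 0] with t ht ht0
  rw [Real.norm_of_nonneg (hφnonneg t ht0.le),
    Real.norm_of_nonneg (Real.rpow_nonneg ht0.le _)]
  exact hfinal t ht
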